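/- Define f_r(n) = (1/2)·C(n,r) if r is odd and n is even, and f_r(n) = (1/2)·(C(n,r) − C(⌊n/2⌋, ⌊r/2⌋)) otherwise. For all 2 ≤ r ≤ n, the maximum over all involutions ψ ∈ S_n of the number of 2-cycles of the induced permutation ψ̃ on r-subsets of [n] equals f_r(n), and the maximum is attained by any involution with at most one fixed point. -/

import Mathlib

/-- f_r(n) from the paper. -/
def fr (n r : ℕ) : ℕ :=
  if r % 2 = 1 ∧ n % 2 = 0 then n.choose r / 2
  else (n.choose r - (n / 2).choose (r / 2)) / 2

/-- The number of 2-cycles of the permutation induced by ψ on r-subsets of [n]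
(half the number of ordered pairs (e,f) of distinct r-sets with ψ(e)=f and ψ(f)=e). -/
def edgeTwoCycles (n r : ℕ) (ψ : Equiv.Perm (Fin n)) : ℕ :=
  (Finset.filter
    (fun p : Finset (Fin n) × Finset (Fin n) =>
      p.1.card = r ∧ p.1 ≠ p.2 ∧ p.1.image ψ = p.2 ∧ p.2.image ψ = p.1)
    (Finset.univ ×ˢ Finset.univ)).card / 2

open Finset

/-! ### Auxiliary definitions -/

/-- Number of `r`-subsets fixed (setwise) by `ψ`. -/
def fixCount (n r : ℕ) (ψ : Equiv.Perm (Fin n)) : ℕ :=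
  ((Finset.powersetCard r (Finset.univ : Finset (Fin n))).filter
    (fun e => e.image ψ = e)).card

/-- The canonical involution on ℕ with `t` transpositions `(2i, 2i+1)`. -/
def psiNat (t x : ℕ) : ℕ :=
  if x < 2 * t then (if x % 2 = 0 then x + 1 else x - 1) else x

lemma psiNat_lt {n t x : ℕ} (ht : 2 * t ≤ n) (hx : x < n) : psiNat t x < n := by
  unfold psiNat; split_ifs <;> omega

lemma psiNat_invol (t x : ℕ) : psiNat t (psiNat t x) = x := by
  unfold psiNat; split_ifs <;> omega

lemma psiNat_div2 (t x : ℕ) : psiNat t x / 2 = x / 2 := by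
  unfold psiNat; split_ifs <;> omega

/-- The canonical involution on `Fin n` with `t` transpositions. -/
def psiPerm (n t : ℕ) (ht : 2 * t ≤ n) : Equiv.Perm (Fin n) :=
  Function.Involutive.toPerm (fun x => ⟨psiNat t x.val, psiNat_lt ht x.isLt⟩)
    (fun x => by
      apply Fin.ext
      simp [psiNat_invol])

lemma psiPerm_apply {n t : ℕ} (ht : 2 * t ≤ n) (x : Fin n) :
    ((psiPerm n t ht x : Fin n) : ℕ) = psiNat t x.val := rfl

lemma psiPerm_invol {n t : ℕ} (ht : 2 * t ≤ n) (x : Fin n) :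
    psiPerm n t ht (psiPerm n t ht x) = x := by
  apply Fin.ext
  simp [psiPerm_apply, psiNat_invol]

/-! ### edgeTwoCycles via fixCount -/

lemma edgeTwoCycles_eq (n r : ℕ) (ψ : Equiv.Perm (Fin n)) (h : ∀ x, ψ (ψ x) = x) :
    edgeTwoCycles n r ψ = (n.choose r - fixCount n r ψ) / 2 := by
  have himg : ∀ e : Finset (Fin n), (e.image ψ).image ψ = e := by
    intro e
    rw [Finset.image_image]
    have : (⇑ψ ∘ ⇑ψ) = id := funext h
    rw [this, Finset.image_id]
  have key : (Finset.filter
      (fun p : Finset (Fin n) × Finset (Fin n) =>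
        p.1.card = r ∧ p.1 ≠ p.2 ∧ p.1.image ψ = p.2 ∧ p.2.image ψ = p.1)
      (Finset.univ ×ˢ Finset.univ)).card
      = ((Finset.powersetCard r (Finset.univ : Finset (Fin n))).filter
          (fun e => e.image ψ ≠ e)).card := by
    apply Finset.card_bij (fun p _ => p.1)
    · intro p hp
      simp only [Finset.mem_filter, Finset.mem_product] at hp
      obtain ⟨-, hcard, hne, h12, h21⟩ := hp
      simp only [Finset.mem_filter, Finset.mem_powersetCard_univ]
      refine ⟨hcard, ?_⟩
      intro himg1
      exact hne (by rw [← h12, himg1])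
    · intro p hp q hq hpq
      simp only [Finset.mem_filter, Finset.mem_product] at hp hq
      obtain ⟨-, -, -, h12p, -⟩ := hp
      obtain ⟨-, -, -, h12q, -⟩ := hq
      have : p.2 = q.2 := by rw [← h12p, ← h12q, hpq]
      exact Prod.ext hpq this
    · intro e he
      simp only [Finset.mem_filter, Finset.mem_powersetCard_univ] at he
      refine ⟨(e, e.image ψ), ?_, rfl⟩
      exact Finset.mem_filter.mpr ⟨Finset.mem_product.mpr ⟨Finset.mem_univ _, Finset.mem_univ _⟩,
        he.1, fun hh => he.2 hh.symm, rfl, himg e⟩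
  have hsplit := Finset.card_filter_add_card_filter_not
    (s := Finset.powersetCard r (Finset.univ : Finset (Fin n)))
    (p := fun e => e.image ψ = e)
  have hcard : (Finset.powersetCard r (Finset.univ : Finset (Fin n))).card = n.choose r := by
    rw [Finset.card_powersetCard, Finset.card_univ, Fintype.card_fin]
  unfold edgeTwoCycles fixCount
  rw [key]
  congr 1
  rw [hcard] at hsplit
  simp only [ne_eq]
  omega

/-! ### fixCount is a conjugation invariant -/

lemma fixCount_conj (n r : ℕ) (σ ψ : Equiv.Perm (Fin n)) :
    fixCount n r (σ * ψ * σ⁻¹) = fixCount n r ψ := by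
  have himg : ∀ e : Finset (Fin n), (e.image σ).image (σ * ψ * σ⁻¹) = (e.image ψ).image σ := by
    intro e
    rw [Finset.image_image, Finset.image_image]
    congr 1
    funext x
    simp [Equiv.Perm.mul_apply]
  unfold fixCount
  symm
  apply Finset.card_nbij' (fun e => e.image (⇑σ)) (fun e => e.image (⇑σ⁻¹))
  · intro e he
    simp only [Finset.mem_coe, Finset.mem_filter, Finset.mem_powersetCard_univ] at he ⊢
    refine ⟨by rw [Finset.card_image_of_injective _ σ.injective]; exact he.1, ?_⟩
    rw [himg, he.2]
  · intro e he
    simp only [Finset.mem_coe, Finset.mem_filter, Finset.mem_powersetCard_univ] at he ⊢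
    refine ⟨by rw [Finset.card_image_of_injective _ σ⁻¹.injective]; exact he.1, ?_⟩
    have := he.2
    have h2 : ((e.image (⇑σ⁻¹)).image (⇑ψ)).image (⇑σ) = (e.image (⇑σ⁻¹)).image (⇑σ) := by
      rw [← himg]
      have : (e.image (⇑σ⁻¹)).image (⇑σ) = e := by
        rw [Finset.image_image]
        have : (⇑σ ∘ ⇑σ⁻¹) = id := by funext x; simp
        rw [this, Finset.image_id]
      rw [this, he.2, ← this]
    exact Finset.image_injective σ.injective h2
  · intro e _
    dsimp only
    rw [Finset.image_image]
    have : (⇑σ⁻¹ ∘ ⇑σ) = id := by funext x; simp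
    rw [this, Finset.image_id]
  · intro e _
    dsimp only
    rw [Finset.image_image]
    have : (⇑σ ∘ ⇑σ⁻¹) = id := by funext x; simp
    rw [this, Finset.image_id]

/-! ### Conjugacy of involutions -/

lemma invol_cycleType {n : ℕ} (ψ : Equiv.Perm (Fin n)) (h : ∀ x, ψ (ψ x) = x) :
    ψ.cycleType = Multiset.replicate (ψ.support.card / 2) 2 ∧ ψ.support.card % 2 = 0 := by
  have h2 : ψ ^ 2 = 1 := by
    ext x
    simp [pow_succ, h]
  have hord : orderOf ψ ∣ 2 := orderOf_dvd_of_pow_eq_one h2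
  have hall : ∀ a ∈ ψ.cycleType, a = 2 := by
    intro a ha
    have hdvd : a ∣ 2 := by
      have := Multiset.dvd_lcm ha
      rw [Equiv.Perm.lcm_cycleType] at this
      exact this.trans hord
    have h2le := Equiv.Perm.two_le_of_mem_cycleType ha
    have := Nat.le_of_dvd (by norm_num) hdvd
    omega
  have hrep : ψ.cycleType = Multiset.replicate (Multiset.card ψ.cycleType) 2 :=
    (Multiset.eq_replicate_card).mpr hall
  have hsum := Equiv.Perm.sum_cycleType ψ
  rw [hrep] at hsum
  rw [Multiset.sum_replicate, smul_eq_mul] at hsum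
  constructor
  · rw [hrep]
    congr 1
    omega
  · omega

lemma isConj_invol {n : ℕ} (ψ₁ ψ₂ : Equiv.Perm (Fin n)) (h₁ : ∀ x, ψ₁ (ψ₁ x) = x)
    (h₂ : ∀ x, ψ₂ (ψ₂ x) = x) (hs : ψ₁.support.card = ψ₂.support.card) :
    IsConj ψ₁ ψ₂ := by
  apply Equiv.Perm.isConj_of_cycleType_eq
  rw [(invol_cycleType ψ₁ h₁).1, (invol_cycleType ψ₂ h₂).1, hs]

lemma psiPerm_fixed_iff {n t : ℕ} (ht : 2 * t ≤ n) (x : Fin n) :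
    psiPerm n t ht x = x ↔ 2 * t ≤ x.val := by
  rw [Fin.ext_iff, psiPerm_apply]
  unfold psiNat
  split_ifs <;> omega

lemma image_val_filter {n : ℕ} (p : ℕ → Prop) [DecidablePred p] :
    ((Finset.univ.filter (fun x : Fin n => p x.val)).image Fin.val)
      = (Finset.range n).filter p := by
  ext y
  simp only [Finset.mem_image, Finset.mem_filter, Finset.mem_univ, true_and, Finset.mem_range]
  constructor
  · rintro ⟨x, hx, rfl⟩
    exact ⟨x.isLt, hx⟩
  · rintro ⟨hy, hp⟩
    exact ⟨⟨y, hy⟩, hp, rfl⟩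

lemma card_filter_val {n : ℕ} (p : ℕ → Prop) [DecidablePred p] :
    (Finset.univ.filter (fun x : Fin n => p x.val)).card
      = ((Finset.range n).filter p).card := by
  rw [← image_val_filter p, Finset.card_image_of_injective _ Fin.val_injective]

lemma psiPerm_support_card {n t : ℕ} (ht : 2 * t ≤ n) :
    (psiPerm n t ht).support.card = 2 * t := by
  have : (psiPerm n t ht).support = Finset.univ.filter (fun x : Fin n => x.val < 2 * t) := by
    ext x
    rw [Equiv.Perm.mem_support]
    simp only [Finset.mem_filter, Finset.mem_univ, true_and]
    rw [Ne, psiPerm_fixed_iff]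
    omega
  rw [this, card_filter_val (fun y => y < 2 * t)]
  have : (Finset.range n).filter (fun y => y < 2 * t) = Finset.range (2 * t) := by
    ext y
    simp only [Finset.mem_filter, Finset.mem_range]
    omega
  rw [this, Finset.card_range]

/-! ### The pairs construction -/

def pairsOf (A : Finset ℕ) : Finset ℕ := A.biUnion fun i => {2 * i, 2 * i + 1}

lemma mem_pairsOf {A : Finset ℕ} {x : ℕ} : x ∈ pairsOf A ↔ x / 2 ∈ A := by
  simp only [pairsOf, Finset.mem_biUnion, Finset.mem_insert, Finset.mem_singleton]
  constructor
  · rintro ⟨i, hi, rfl | rfl⟩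
    · simpa [Nat.mul_div_cancel_left] using hi
    · have : (2 * i + 1) / 2 = i := by omega
      rwa [this]
  · intro h
    exact ⟨x / 2, h, by omega⟩

lemma card_pairsOf (A : Finset ℕ) : (pairsOf A).card = 2 * A.card := by
  unfold pairsOf
  rw [Finset.card_biUnion]
  · have : ∀ i ∈ A, ({2 * i, 2 * i + 1} : Finset ℕ).card = 2 := by
      intro i _
      rw [Finset.card_insert_of_notMem (by simp), Finset.card_singleton]
    rw [Finset.sum_congr rfl this, Finset.sum_const, smul_eq_mul, mul_comm]
  · intro i _ j _ hij
    simp only [Finset.disjoint_left, Finset.mem_insert, Finset.mem_singleton]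
    rintro x (rfl | rfl) (h | h) <;> omega

def eSetN (n r : ℕ) (A : Finset ℕ) : Finset ℕ :=
  pairsOf A ∪ (if r % 2 = 1 then {n - 1} else ∅)

lemma mem_eSetN {n r : ℕ} {A : Finset ℕ} {x : ℕ} :
    x ∈ eSetN n r A ↔ x / 2 ∈ A ∨ (r % 2 = 1 ∧ x = n - 1) := by
  unfold eSetN
  rw [Finset.mem_union, mem_pairsOf]
  by_cases h : r % 2 = 1 <;> simp [h]

lemma card_eSetN {n r : ℕ} {A : Finset ℕ} (hA : A ⊆ Finset.range (n / 2))
    (hodd : r % 2 = 1 → n % 2 = 1) :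
    (eSetN n r A).card = 2 * A.card + r % 2 := by
  unfold eSetN
  by_cases h : r % 2 = 1
  · have hn : n % 2 = 1 := hodd h
    rw [if_pos h, Finset.card_union_of_disjoint, card_pairsOf, Finset.card_singleton, h]
    simp only [Finset.disjoint_singleton_right, mem_pairsOf]
    intro hmem
    have := Finset.mem_range.mp (hA hmem)
    omega
  · rw [if_neg h, Finset.union_empty, card_pairsOf]
    omega

def eF (n r : ℕ) (A : Finset ℕ) : Finset (Fin n) :=
  Finset.univ.filter (fun x => (x : ℕ) ∈ eSetN n r A)

lemma eSetN_subset_range {n r : ℕ} {A : Finset ℕ} (hA : A ⊆ Finset.range (n / 2))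
    (hn : 1 ≤ n) : eSetN n r A ⊆ Finset.range n := by
  intro x hx
  rw [mem_eSetN] at hx
  rw [Finset.mem_range]
  rcases hx with h | ⟨-, rfl⟩
  · have := Finset.mem_range.mp (hA h)
    omega
  · omega

lemma image_val_eF {n r : ℕ} {A : Finset ℕ} (hA : A ⊆ Finset.range (n / 2))
    (hn : 1 ≤ n) : (eF n r A).image Fin.val = eSetN n r A := by
  rw [eF, image_val_filter (fun y => y ∈ eSetN n r A)]
  ext x
  simp only [Finset.mem_filter, Finset.mem_range]
  constructor
  · exact fun h => h.2
  · intro h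
    exact ⟨Finset.mem_range.mp (eSetN_subset_range hA hn h), h⟩

lemma card_eF {n r : ℕ} {A : Finset ℕ} (hA : A ⊆ Finset.range (n / 2))
    (hn : 1 ≤ n) (hodd : r % 2 = 1 → n % 2 = 1) :
    (eF n r A).card = 2 * A.card + r % 2 := by
  rw [← card_eSetN hA hodd, ← image_val_eF hA hn,
    Finset.card_image_of_injective _ Fin.val_injective]

lemma eF_invariant {n r t : ℕ} (ht : 2 * t ≤ n) {A : Finset ℕ}
    (hA : A ⊆ Finset.range (n / 2)) (hodd : r % 2 = 1 → n % 2 = 1) :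
    (eF n r A).image (psiPerm n t ht) = eF n r A := by
  apply Finset.eq_of_subset_of_card_le
  · rw [Finset.image_subset_iff]
    intro x hx
    simp only [eF, Finset.mem_filter, Finset.mem_univ, true_and] at hx ⊢
    rw [psiPerm_apply]
    rw [mem_eSetN] at hx ⊢
    rcases hx with h1 | ⟨hr, hx⟩
    · left
      rwa [psiNat_div2]
    · right
      refine ⟨hr, ?_⟩
      have hn1 : n % 2 = 1 := hodd hr
      have : ¬ (x.val < 2 * t) := by omega
      unfold psiNat
      rw [if_neg this, hx]
  · rw [Finset.card_image_of_injective _ (psiPerm n t ht).injective]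

lemma eF_inj {n r : ℕ} {A₁ A₂ : Finset ℕ} (hA₁ : A₁ ⊆ Finset.range (n / 2))
    (hA₂ : A₂ ⊆ Finset.range (n / 2)) (hn : 1 ≤ n) (hodd : r % 2 = 1 → n % 2 = 1)
    (h : eF n r A₁ = eF n r A₂) : A₁ = A₂ := by
  have hE : eSetN n r A₁ = eSetN n r A₂ := by
    rw [← image_val_eF hA₁ hn, ← image_val_eF hA₂ hn, h]
  have key : ∀ (B₁ B₂ : Finset ℕ), B₁ ⊆ Finset.range (n / 2) →
      B₂ ⊆ Finset.range (n / 2) → eSetN n r B₁ = eSetN n r B₂ → ∀ i ∈ B₁, i ∈ B₂ := by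
    intro B₁ B₂ hB₁ hB₂ hEB i hi
    have h2i : 2 * i ∈ eSetN n r B₁ := by
      rw [mem_eSetN]
      left
      have : 2 * i / 2 = i := by omega
      rwa [this]
    rw [hEB, mem_eSetN] at h2i
    rcases h2i with h' | ⟨hr, h2⟩
    · have : 2 * i / 2 = i := by omega
      rwa [this] at h'
    · have hn1 : n % 2 = 1 := hodd hr
      have := Finset.mem_range.mp (hB₁ hi)
      omega
  exact Finset.Subset.antisymm (fun i hi => key A₁ A₂ hA₁ hA₂ hE i hi)
    (fun i hi => key A₂ A₁ hA₂ hA₁ hE.symm i hi)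

/-! ### Lower bound for fixCount of the canonical involution -/

lemma le_fixCount {n r t : ℕ} (ht : 2 * t ≤ n) (hn : 1 ≤ n)
    (hodd : r % 2 = 1 → n % 2 = 1) :
    (n / 2).choose (r / 2) ≤ fixCount n r (psiPerm n t ht) := by
  have hcard : ((Finset.range (n / 2)).powersetCard (r / 2)).card = (n / 2).choose (r / 2) := by
    rw [Finset.card_powersetCard, Finset.card_range]
  rw [← hcard]
  unfold fixCount
  apply Finset.card_le_card_of_injOn (fun A => eF n r A)
  · intro A hA
    rw [Finset.mem_coe, Finset.mem_powersetCard] at hA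
    obtain ⟨hsub, hcardA⟩ := hA
    simp only [Finset.mem_coe, Finset.mem_filter, Finset.mem_powersetCard_univ]
    constructor
    · rw [card_eF hsub hn hodd, hcardA]
      omega
    · exact eF_invariant ht hsub hodd
  · intro A₁ h₁ A₂ h₂ h
    rw [Finset.mem_coe, Finset.mem_powersetCard] at h₁ h₂
    exact eF_inj h₁.1 h₂.1 hn hodd h

/-! ### Structure of invariant sets of the maximal canonical involution -/

lemma decompN {n : ℕ} (E : Finset ℕ) (hE : ∀ x ∈ E, x < n)
    (hcl : ∀ x ∈ E, psiNat (n / 2) x ∈ E) :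
    E = pairsOf ((Finset.range (n / 2)).filter (fun k => 2 * k ∈ E)) ∪
        (if n % 2 = 1 then E.filter (· = n - 1) else (∅ : Finset ℕ)) ∧
      Disjoint (pairsOf ((Finset.range (n / 2)).filter (fun k => 2 * k ∈ E)))
        (if n % 2 = 1 then E.filter (· = n - 1) else (∅ : Finset ℕ)) := by
  set A := (Finset.range (n / 2)).filter (fun k => 2 * k ∈ E) with hAdef
  constructor
  · ext x
    rw [Finset.mem_union, mem_pairsOf, hAdef, Finset.mem_filter, Finset.mem_range]
    constructor
    · intro hx
      have hxn : x < n := hE x hx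
      by_cases hlast : n % 2 = 1 ∧ x = n - 1
      · right
        rw [if_pos hlast.1, Finset.mem_filter]
        exact ⟨hx, hlast.2⟩
      · left
        have hx2t : x < 2 * (n / 2) := by omega
        refine ⟨by omega, ?_⟩
        by_cases hpar : x % 2 = 0
        · have : 2 * (x / 2) = x := by omega
          rwa [this]
        · have hψ := hcl x hx
          unfold psiNat at hψ
          rw [if_pos hx2t, if_neg hpar] at hψ
          have : 2 * (x / 2) = x - 1 := by omega
          rwa [this]
    · rintro (⟨hlt, hmem⟩ | hright)
      · rcases (by omega : x = 2 * (x / 2) ∨ x = 2 * (x / 2) + 1) with hx | hx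
        · rw [hx]; exact hmem
        · have hψ := hcl (2 * (x / 2)) hmem
          unfold psiNat at hψ
          rw [if_pos (by omega), if_pos (by omega)] at hψ
          rw [hx]; exact hψ
      · by_cases hnp : n % 2 = 1
        · rw [if_pos hnp, Finset.mem_filter] at hright
          exact hright.1
        · rw [if_neg hnp] at hright
          exact absurd hright (Finset.notMem_empty x)
  · by_cases hnp : n % 2 = 1
    · rw [if_pos hnp, Finset.disjoint_left]
      intro x hx hx'
      rw [mem_pairsOf, hAdef, Finset.mem_filter, Finset.mem_range] at hx
      rw [Finset.mem_filter] at hx'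
      omega
    · rw [if_neg hnp]
      exact Finset.disjoint_empty_right _

lemma invariant_structure {n r : ℕ} (htn2 : 2 * (n / 2) ≤ n) (hn : 1 ≤ n)
    (e : Finset (Fin n)) (hinv : e.image (psiPerm n (n / 2) htn2) = e)
    (hcard : e.card = r) :
    ((Finset.range (n / 2)).filter (fun k => 2 * k ∈ e.image Fin.val)).card = r / 2 ∧
      (r % 2 = 1 → n % 2 = 1) ∧
      e.image Fin.val = eSetN n r ((Finset.range (n / 2)).filter
        (fun k => 2 * k ∈ e.image Fin.val)) := by
  set E := e.image Fin.val with hEdef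
  set A := (Finset.range (n / 2)).filter (fun k => 2 * k ∈ E) with hAdef
  have hE : ∀ x ∈ E, x < n := by
    intro x hx
    rw [hEdef, Finset.mem_image] at hx
    obtain ⟨y, -, rfl⟩ := hx
    exact y.isLt
  have hcl : ∀ x ∈ E, psiNat (n / 2) x ∈ E := by
    intro x hx
    rw [hEdef, Finset.mem_image] at hx
    obtain ⟨y, hy, rfl⟩ := hx
    have : psiPerm n (n / 2) htn2 y ∈ e := by
      rw [← hinv]
      exact Finset.mem_image_of_mem _ hy
    rw [hEdef, Finset.mem_image]
    exact ⟨psiPerm n (n / 2) htn2 y, this, rfl⟩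
  obtain ⟨hdecomp, hdisj⟩ := decompN E hE hcl
  have hcardE : E.card = r := by
    rw [hEdef, Finset.card_image_of_injective _ Fin.val_injective, hcard]
  set C := (if n % 2 = 1 then E.filter (· = n - 1) else (∅ : Finset ℕ)) with hCdef
  have hcardC_le : C.card ≤ 1 := by
    rw [hCdef]
    by_cases hnp : n % 2 = 1
    · rw [if_pos hnp]
      calc (E.filter (· = n - 1)).card ≤ ({n - 1} : Finset ℕ).card :=
            Finset.card_le_card (by
              intro x hx
              rw [Finset.mem_filter] at hx
              rw [Finset.mem_singleton]
              exact hx.2)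
        _ = 1 := Finset.card_singleton _
    · rw [if_neg hnp]
      simp
  have hsum : r = 2 * A.card + C.card := by
    rw [← hcardE]
    conv_lhs => rw [hdecomp]
    rw [Finset.card_union_of_disjoint hdisj, card_pairsOf]
  have hApow : A.card = r / 2 := by omega
  have hCn : C.card = r % 2 := by omega
  refine ⟨hApow, ?_, ?_⟩
  · intro hrodd
    by_contra hnp
    have : C = ∅ := by
      rw [hCdef, if_neg (by omega)]
    rw [this, Finset.card_empty] at hCn
    omega
  · have hCeq : C = (if r % 2 = 1 then ({n - 1} : Finset ℕ) else ∅) := by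
      by_cases hrp : r % 2 = 1
      · rw [if_pos hrp]
        have hc1 : C.card = 1 := by omega
        have hnp : n % 2 = 1 := by
          by_contra hnp
          have : C = ∅ := by rw [hCdef, if_neg (by omega)]
          rw [this, Finset.card_empty] at hc1
          omega
        have hsub : C ⊆ {n - 1} := by
          rw [hCdef, if_pos hnp]
          intro x hx
          rw [Finset.mem_filter] at hx
          rw [Finset.mem_singleton]
          exact hx.2
        apply Finset.eq_of_subset_of_card_le hsub
        rw [Finset.card_singleton, hc1]
      · rw [if_neg hrp]
        have : C.card = 0 := by omega
        exact Finset.card_eq_zero.mp this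
    rw [hdecomp, eSetN, hCeq]

/-! ### Exact fixCount of the maximal canonical involution -/

lemma fixCount_zero {n r : ℕ} (htn2 : 2 * (n / 2) ≤ n) (hn : 1 ≤ n)
    (hrodd : r % 2 = 1) (hneven : n % 2 = 0) :
    fixCount n r (psiPerm n (n / 2) htn2) = 0 := by
  unfold fixCount
  rw [Finset.card_eq_zero, Finset.filter_eq_empty_iff]
  intro e he
  rw [Finset.mem_powersetCard_univ] at he
  intro hinv
  obtain ⟨-, hodd, -⟩ := invariant_structure htn2 hn e hinv he
  omega

lemma fixCount_max {n r : ℕ} (htn2 : 2 * (n / 2) ≤ n) (hn : 1 ≤ n)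
    (hodd : r % 2 = 1 → n % 2 = 1) :
    fixCount n r (psiPerm n (n / 2) htn2) = (n / 2).choose (r / 2) := by
  have hcard : ((Finset.range (n / 2)).powersetCard (r / 2)).card = (n / 2).choose (r / 2) := by
    rw [Finset.card_powersetCard, Finset.card_range]
  rw [← hcard]
  unfold fixCount
  apply Finset.card_nbij' (fun e => (Finset.range (n / 2)).filter (fun k => 2 * k ∈ e.image Fin.val))
    (fun A => eF n r A)
  · intro e he
    rw [Finset.mem_coe, Finset.mem_filter, Finset.mem_powersetCard_univ] at he
    obtain ⟨hc, hinv⟩ := he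
    obtain ⟨hAcard, -, -⟩ := invariant_structure htn2 hn e hinv hc
    rw [Finset.mem_coe, Finset.mem_powersetCard]
    exact ⟨Finset.filter_subset _ _, hAcard⟩
  · intro A hA
    rw [Finset.mem_coe, Finset.mem_powersetCard] at hA
    obtain ⟨hsub, hcardA⟩ := hA
    rw [Finset.mem_coe, Finset.mem_filter, Finset.mem_powersetCard_univ]
    constructor
    · rw [card_eF hsub hn hodd, hcardA]
      omega
    · exact eF_invariant htn2 hsub hodd
  · intro e he
    rw [Finset.mem_coe, Finset.mem_filter, Finset.mem_powersetCard_univ] at he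
    obtain ⟨hc, hinv⟩ := he
    obtain ⟨hAcard, -, hEeq⟩ := invariant_structure htn2 hn e hinv hc
    dsimp only
    apply Finset.image_injective Fin.val_injective
    rw [image_val_eF (Finset.filter_subset _ _) hn, ← hEeq]
  · intro A hA
    rw [Finset.mem_coe, Finset.mem_powersetCard] at hA
    obtain ⟨hsub, hcardA⟩ := hA
    dsimp only
    rw [image_val_eF hsub hn]
    ext i
    rw [Finset.mem_filter, Finset.mem_range, mem_eSetN]
    constructor
    · rintro ⟨hi, h' | ⟨hr, h2⟩⟩
      · have : 2 * i / 2 = i := by omega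
        rwa [this] at h'
      · have hn1 : n % 2 = 1 := hodd hr
        omega
    · intro hi
      have hilt := Finset.mem_range.mp (hsub hi)
      refine ⟨hilt, Or.inl ?_⟩
      have : 2 * i / 2 = i := by omega
      rwa [this]

/-! ### Reduction: any involution is conjugate to a canonical one -/

lemma reduce_to_canonical {n r : ℕ} (ψ : Equiv.Perm (Fin n)) (h : ∀ x, ψ (ψ x) = x) :
    ∃ t, ∃ ht : 2 * t ≤ n,
      2 * t = n - ((Finset.univ : Finset (Fin n)).filter (fun x => ψ x = x)).card ∧
      fixCount n r ψ = fixCount n r (psiPerm n t ht) := by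
  obtain ⟨-, heven⟩ := invol_cycleType ψ h
  set t := ψ.support.card / 2 with htdef
  have h2t : 2 * t = ψ.support.card := by omega
  have htle : 2 * t ≤ n := by
    rw [h2t]
    calc ψ.support.card ≤ (Finset.univ : Finset (Fin n)).card := Finset.card_le_univ _
      _ = n := by rw [Finset.card_univ, Fintype.card_fin]
  refine ⟨t, htle, ?_, ?_⟩
  · have hsupp : ψ.support = (Finset.univ : Finset (Fin n)).filter (fun x => ¬ ψ x = x) := by
      ext x
      rw [Equiv.Perm.mem_support]
      simp
    have hsplit := Finset.card_filter_add_card_filter_not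
      (s := (Finset.univ : Finset (Fin n))) (p := fun x => ψ x = x)
    rw [Finset.card_univ, Fintype.card_fin] at hsplit
    rw [h2t, hsupp]
    omega
  · have hconj : IsConj ψ (psiPerm n t htle) := by
      apply isConj_invol ψ _ h (psiPerm_invol htle)
      rw [psiPerm_support_card, h2t]
    obtain ⟨c, hc⟩ := isConj_iff.mp hconj
    rw [← hc, fixCount_conj]

/-! ### Main theorem -/

theorem stmt_5 (n r : ℕ) (hr : 2 ≤ r) (hrn : r ≤ n) :
    (∀ ψ : Equiv.Perm (Fin n), (∀ x, ψ (ψ x) = x) →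
      edgeTwoCycles n r ψ ≤ fr n r) ∧
    (∀ ψ : Equiv.Perm (Fin n), (∀ x, ψ (ψ x) = x) →
      ((Finset.univ : Finset (Fin n)).filter (fun x => ψ x = x)).card ≤ 1 →
      edgeTwoCycles n r ψ = fr n r) := by
  have hn : 1 ≤ n := by omega
  have htn2 : 2 * (n / 2) ≤ n := by omega
  constructor
  · intro ψ hψ
    rw [edgeTwoCycles_eq n r ψ hψ]
    unfold fr
    by_cases hcase : r % 2 = 1 ∧ n % 2 = 0
    · rw [if_pos hcase]
      exact Nat.div_le_div_right (Nat.sub_le _ _)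
    · rw [if_neg hcase]
      apply Nat.div_le_div_right
      apply Nat.sub_le_sub_left
      obtain ⟨t, ht, -, hfc⟩ := reduce_to_canonical (r := r) ψ hψ
      rw [hfc]
      exact le_fixCount ht hn (by omega)
  · intro ψ hψ hfix
    rw [edgeTwoCycles_eq n r ψ hψ]
    obtain ⟨t, ht, hteq, hfc⟩ := reduce_to_canonical (r := r) ψ hψ
    have hfle : ((Finset.univ : Finset (Fin n)).filter (fun x => ψ x = x)).card ≤ n := by
      calc _ ≤ (Finset.univ : Finset (Fin n)).card := Finset.card_le_card (Finset.filter_subset _ _)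
        _ = n := by rw [Finset.card_univ, Fintype.card_fin]
    have htval : t = n / 2 := by omega
    subst htval
    rw [hfc]
    unfold fr
    by_cases hcase : r % 2 = 1 ∧ n % 2 = 0
    · rw [if_pos hcase, fixCount_zero ht hn hcase.1 hcase.2, Nat.sub_zero]
    · rw [if_neg hcase, fixCount_max ht hn (by omega)]
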